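/- Let a, p, q, h be unit quaternions with re(h) = 0, and set x = a⁻¹ * h * q⁻¹ * p⁻¹ and w = x * h * x⁻¹ * h⁻¹ (the commutator [x, h]). Then w = −1 if and only if re(a⁻¹ * h * q⁻¹ * p⁻¹) = 0 and re(h * a⁻¹ * h * q⁻¹ * p⁻¹) = 0. (The equivalence from Lemma 2.2 of the paper: the w₂ condition [ā h q̄ p̄, h] = −1 holds if and only if G(s, ·) = (0, 0).) -/

import Mathlib

open Quaternion

lemma anticomm_key (x h : ℍ[ℝ]) (hhre : h.re = 0) :
    x * h + h * x = ((2 * x.re : ℝ) : ℍ[ℝ]) * h + ((2 * (h * x).re : ℝ) : ℍ[ℝ]) := by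
  ext <;>
    simp [Quaternion.re_mul, Quaternion.imI_mul, Quaternion.imJ_mul, Quaternion.imK_mul,
      hhre] <;> ring

/-- The equivalence from Lemma 2.2 of the paper: for unit quaternions `a, p, q, h` with
`re h = 0`, setting `x = a⁻¹ h q⁻¹ p⁻¹`, the `w₂` condition `[x, h] = -1` holds if and only if
`re(a⁻¹ h q⁻¹ p⁻¹) = 0` and `re(h a⁻¹ h q⁻¹ p⁻¹) = 0`. -/
theorem w2_condition_iff (a p q h : ℍ[ℝ])
    (ha : ‖a‖ = 1) (hp : ‖p‖ = 1) (hq : ‖q‖ = 1) (hh : ‖h‖ = 1)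
    (hhre : h.re = 0)
    (x w : ℍ[ℝ]) (hx : x = a⁻¹ * h * q⁻¹ * p⁻¹) (hw : w = x * h * x⁻¹ * h⁻¹) :
    w = -1 ↔ (a⁻¹ * h * q⁻¹ * p⁻¹).re = 0 ∧ (h * (a⁻¹ * h * q⁻¹ * p⁻¹)).re = 0 := by
  have hh0 : h ≠ 0 := by intro hz; rw [hz] at hh; simp at hh
  have hx0 : x ≠ 0 := by
    intro hz
    rw [hz] at hx
    have := congrArg norm hx
    simp [norm_mul, norm_inv, ha, hp, hq, hh] at this
  -- main reduction: w = -1 ↔ x*h = -(h*x)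
  have hmain : w = -1 ↔ x * h = -(h * x) := by
    constructor
    · intro hw1
      have : w * h * x = x * h := by
        rw [hw]
        simp [mul_assoc, inv_mul_cancel₀ hh0, inv_mul_cancel₀ hx0]
      rw [hw1] at this
      simpa using this.symm
    · intro hac
      rw [hw, hac, neg_mul, neg_mul, mul_assoc h x x⁻¹, mul_inv_cancel₀ hx0, mul_one,
        mul_inv_cancel₀ hh0]
  rw [hmain, ← hx]
  set r : ℝ := x.re with hr
  set c : ℝ := (h * x).re with hc
  constructor
  · intro hac
    have hsum : x * h + h * x = 0 := by rw [hac, neg_add_cancel]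
    rw [anticomm_key x h hhre] at hsum
    rw [← hr, ← hc] at hsum
    have hre := congrArg QuaternionAlgebra.re hsum
    simp [Quaternion.re_mul, hhre] at hre
    refine ⟨?_, hre⟩
    have h2 : ((2 * r : ℝ) : ℍ[ℝ]) * h = 0 := by
      rw [hre] at hsum
      simpa using hsum
    rcases mul_eq_zero.mp h2 with h3 | h3
    · have : (2 * r : ℝ) = 0 := by exact Quaternion.coe_injective (by simpa using h3)
      linarith
    · exact absurd h3 hh0
  · rintro ⟨h1, h2⟩
    have hkey := anticomm_key x h hhre
    rw [← hr, ← hc, h1, h2] at hkey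
    simp at hkey
    exact eq_neg_of_add_eq_zero_left hkey
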